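/- arXiv:2605.18505 — 3 statements merged into one kernel-verified Lean document; each statement's English description precedes it below -/
import Mathlib

section
/- For every dimension d ≥ 1, every λ > 0 and every κ ≥ 1 there exist constants C ≥ 1 and κ' ≥ 1, depending only on d, λ and κ, with the following property: for all u > 0 and all a, b ∈ ℝ^{2d} satisfying κ^{-1}(|𝕋_u^{-1}a| − 1) ≤ |𝕋_u^{-1}b| ≤ κ(|𝕋_u^{-1}a| + 1), one has C^{-1} g_{λ/κ'}(u,a) ≤ g_λ(u,b) ≤ C g_{κ'λ}(u,a). -/
open MeasureTheory
open scoped BigOperators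

/-- The state space `ℝ^d × ℝ^d`. -/
abbrev Vec (d : ℕ) := (Fin d → ℝ) × (Fin d → ℝ)

/-- The anisotropic Gaussian kernel `g_λ(u, z)` on `ℝ^d × ℝ^d`. -/
noncomputable def gk (d : ℕ) (lam u : ℝ) (z : Vec d) : ℝ :=
  (2 * Real.pi * lam) ^ (-(d : ℝ)) * u ^ (-(2 * (d : ℝ))) *
    Real.exp (-((∑ i, z.1 i ^ 2) / (lam * u) + (∑ i, z.2 i ^ 2) / (lam * u ^ 3)))

/-- `|𝕋_u^{-1} z|`, the Euclidean norm of the anisotropically rescaled vector, i.e.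
`(|z₁|²/u + |z₂|²/u³)^{1/2}`. -/
noncomputable def tnorm (d : ℕ) (u : ℝ) (z : Vec d) : ℝ :=
  Real.sqrt ((∑ i, z.1 i ^ 2) / u + (∑ i, z.2 i ^ 2) / u ^ 3)

lemma gk_eq (d : ℕ) (μ u : ℝ) (hμ : μ ≠ 0) (hu : 0 < u) (z : Vec d) :
    gk d μ u z = (2 * Real.pi * μ) ^ (-(d : ℝ)) * u ^ (-(2 * (d : ℝ))) *
      Real.exp (-((tnorm d u z) ^ 2 / μ)) := by
  have hu0 : u ≠ 0 := hu.ne'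
  unfold gk tnorm
  rw [Real.sq_sqrt (by positivity)]
  congr 2
  field_simp

/-- For every `d ≥ 1`, `λ > 0`, `κ ≥ 1` there exist `C ≥ 1` and `κ' ≥ 1` such that whenever
`κ^{-1}(|𝕋_u^{-1}a| − 1) ≤ |𝕋_u^{-1}b| ≤ κ(|𝕋_u^{-1}a| + 1)`, one has
`C^{-1} g_{λ/κ'}(u,a) ≤ g_λ(u,b) ≤ C g_{κ'λ}(u,a)`. -/
theorem stmt2 (d : ℕ) (hd : 1 ≤ d) (lam κ : ℝ) (hlam : 0 < lam) (hκ : 1 ≤ κ) :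
    ∃ C : ℝ, 1 ≤ C ∧ ∃ κ' : ℝ, 1 ≤ κ' ∧
      ∀ u : ℝ, 0 < u → ∀ a b : Vec d,
        κ⁻¹ * (tnorm d u a - 1) ≤ tnorm d u b →
        tnorm d u b ≤ κ * (tnorm d u a + 1) →
        C⁻¹ * gk d (lam / κ') u a ≤ gk d lam u b ∧
          gk d lam u b ≤ C * gk d (κ' * lam) u a := by
  have hκ0 : (0:ℝ) < κ := lt_of_lt_of_le one_pos hκ
  set κ' : ℝ := 2 * κ ^ 2 with hκ'def
  have hκ'pos : (0:ℝ) < κ' := by positivity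
  have hκ'1 : (1:ℝ) ≤ κ' := by nlinarith
  set C : ℝ := κ' ^ (d : ℝ) * Real.exp (2 * κ ^ 2 / lam) with hCdef
  have hκ'd : (1:ℝ) ≤ κ' ^ (d : ℝ) :=
    Real.one_le_rpow hκ'1 (by positivity)
  have hC1 : (1:ℝ) ≤ C := by
    have : (1:ℝ) ≤ Real.exp (2 * κ ^ 2 / lam) := Real.one_le_exp (by positivity)
    nlinarith
  have hCpos : (0:ℝ) < C := lt_of_lt_of_le one_pos hC1
  refine ⟨C, hC1, κ', hκ'1, ?_⟩
  intro u hu a b hlb hub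
  set A := tnorm d u a with hA
  set B := tnorm d u b with hB
  have hAnn : 0 ≤ A := Real.sqrt_nonneg _
  have hBnn : 0 ≤ B := Real.sqrt_nonneg _
  -- the two key quadratic bounds
  have hB2 : B ^ 2 ≤ 2 * κ ^ 2 * A ^ 2 + 2 * κ ^ 2 := by
    have h := mul_le_mul hub hub hBnn (by positivity)
    nlinarith [sq_nonneg (κ * (A - 1))]
  have hA2 : A ^ 2 ≤ 2 * κ ^ 2 * B ^ 2 + 2 * κ ^ 2 := by
    have h := mul_le_mul_of_nonneg_left hlb hκ0.le
    rw [← mul_assoc, mul_inv_cancel₀ hκ0.ne', one_mul] at h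
    nlinarith [sq_nonneg (κ * B - 1), sq_nonneg (κ - 1)]
  have hP : (0:ℝ) < 2 * Real.pi * lam := by positivity
  have hEpos : (0:ℝ) < (2 * Real.pi * lam) ^ (-(d : ℝ)) * u ^ (-(2 * (d : ℝ))) := by
    positivity
  constructor
  · -- lower bound
    rw [gk_eq d (lam / κ') u (by positivity) hu, gk_eq d lam u hlam.ne' hu]
    have hsplit : (2 * Real.pi * (lam / κ')) ^ (-(d : ℝ)) =
        κ' ^ ((d : ℝ)) * (2 * Real.pi * lam) ^ (-(d : ℝ)) := by
      rw [show 2 * Real.pi * (lam / κ') = (2 * Real.pi * lam) / κ' by ring,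
        Real.div_rpow hP.le hκ'pos.le, Real.rpow_neg hκ'pos.le (d:ℝ)]
      field_simp
    rw [hsplit]
    have hCne : (κ' ^ ((d:ℝ)))⁻¹ * κ' ^ ((d:ℝ)) = 1 :=
      inv_mul_cancel₀ (ne_of_gt (Real.rpow_pos_of_pos hκ'pos _))
    have hC2 : C⁻¹ * κ' ^ ((d : ℝ)) = Real.exp (-(2 * κ ^ 2 / lam)) := by
      rw [hCdef, mul_inv, mul_right_comm, hCne, one_mul, ← Real.exp_neg]
    have key : Real.exp (-(2 * κ ^ 2 / lam)) * Real.exp (-(A ^ 2 / (lam / κ'))) ≤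
        Real.exp (-(B ^ 2 / lam)) := by
      rw [← Real.exp_add]
      apply Real.exp_le_exp.mpr
      have h1 : A ^ 2 / (lam / κ') = κ' * A ^ 2 / lam := by
        field_simp
      have h2 : B ^ 2 / lam ≤ (2 * κ ^ 2 + κ' * A ^ 2) / lam := by
        gcongr
        rw [hκ'def]; nlinarith
      have h3 : (2 * κ ^ 2 + κ' * A ^ 2) / lam = 2 * κ ^ 2 / lam + κ' * A ^ 2 / lam :=
        add_div _ _ _
      rw [h1]; linarith
    calc C⁻¹ * (κ' ^ ((d:ℝ)) * (2 * Real.pi * lam) ^ (-(d : ℝ)) * u ^ (-(2 * (d : ℝ))) *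
            Real.exp (-(A ^ 2 / (lam / κ'))))
        = ((2 * Real.pi * lam) ^ (-(d : ℝ)) * u ^ (-(2 * (d : ℝ)))) *
            ((C⁻¹ * κ' ^ ((d:ℝ))) * Real.exp (-(A ^ 2 / (lam / κ')))) := by ring
      _ = ((2 * Real.pi * lam) ^ (-(d : ℝ)) * u ^ (-(2 * (d : ℝ)))) *
            (Real.exp (-(2 * κ ^ 2 / lam)) * Real.exp (-(A ^ 2 / (lam / κ')))) := by
            rw [hC2]
      _ ≤ ((2 * Real.pi * lam) ^ (-(d : ℝ)) * u ^ (-(2 * (d : ℝ)))) *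
            Real.exp (-(B ^ 2 / lam)) := mul_le_mul_of_nonneg_left key hEpos.le
      _ = (2 * Real.pi * lam) ^ (-(d : ℝ)) * u ^ (-(2 * (d : ℝ))) *
            Real.exp (-(B ^ 2 / lam)) := by ring
  · -- upper bound
    rw [gk_eq d (κ' * lam) u (by positivity) hu, gk_eq d lam u hlam.ne' hu]
    have hsplit : (2 * Real.pi * (κ' * lam)) ^ (-(d : ℝ)) =
        κ' ^ (-(d : ℝ)) * (2 * Real.pi * lam) ^ (-(d : ℝ)) := by
      rw [show 2 * Real.pi * (κ' * lam) = κ' * (2 * Real.pi * lam) by ring,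
        Real.mul_rpow hκ'pos.le hP.le]
    rw [hsplit]
    have hC2 : C * κ' ^ (-(d : ℝ)) = Real.exp (2 * κ ^ 2 / lam) := by
      rw [hCdef, mul_right_comm, ← Real.rpow_add hκ'pos]
      norm_num
    have key : Real.exp (-(B ^ 2 / lam)) ≤
        Real.exp (2 * κ ^ 2 / lam) * Real.exp (-(A ^ 2 / (κ' * lam))) := by
      rw [← Real.exp_add]
      apply Real.exp_le_exp.mpr
      have h2 : A ^ 2 / (κ' * lam) ≤ (2 * κ ^ 2 + B ^ 2) / lam := by
        rw [div_le_div_iff₀ (by positivity) hlam]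
        have hA2' : A ^ 2 ≤ (2 * κ ^ 2 + B ^ 2) * κ' := by rw [hκ'def]; nlinarith
        calc A ^ 2 * lam ≤ ((2 * κ ^ 2 + B ^ 2) * κ') * lam :=
              mul_le_mul_of_nonneg_right hA2' hlam.le
          _ = (2 * κ ^ 2 + B ^ 2) * (κ' * lam) := by ring
      have h3 : (2 * κ ^ 2 + B ^ 2) / lam = 2 * κ ^ 2 / lam + B ^ 2 / lam :=
        add_div _ _ _
      linarith
    calc (2 * Real.pi * lam) ^ (-(d : ℝ)) * u ^ (-(2 * (d : ℝ))) *
            Real.exp (-(B ^ 2 / lam))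
        = ((2 * Real.pi * lam) ^ (-(d : ℝ)) * u ^ (-(2 * (d : ℝ)))) *
            Real.exp (-(B ^ 2 / lam)) := by ring
      _ ≤ ((2 * Real.pi * lam) ^ (-(d : ℝ)) * u ^ (-(2 * (d : ℝ)))) *
            (Real.exp (2 * κ ^ 2 / lam) * Real.exp (-(A ^ 2 / (κ' * lam)))) :=
            mul_le_mul_of_nonneg_left key hEpos.le
      _ = ((2 * Real.pi * lam) ^ (-(d : ℝ)) * u ^ (-(2 * (d : ℝ)))) *
            ((C * κ' ^ (-(d : ℝ))) * Real.exp (-(A ^ 2 / (κ' * lam)))) := by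
            rw [hC2]
      _ = C * (κ' ^ (-(d : ℝ)) * (2 * Real.pi * lam) ^ (-(d : ℝ)) * u ^ (-(2 * (d : ℝ))) *
            Real.exp (-(A ^ 2 / (κ' * lam)))) := by ring
end

section
/- Let d ≥ 1, γ ∈ (0,1) and M > 0. Let f : ℝ^{2d} → ℝ be bounded with ‖f‖_∞ ≤ M, differentiable in its first d variables with ‖∇_{x₁} f‖_∞ ≤ M, and assume: (i) for every x₂ ∈ ℝ^d and all z, z' ∈ ℝ^d with 0 < |z − z'| ≤ 1, |∇_{x₁} f(z, x₂) − ∇_{x₁} f(z', x₂)| ≤ M |z − z'|^γ; (ii) for every x₁ ∈ ℝ^d and all z, z' ∈ ℝ^d with 0 < |z − z'| ≤ 1, |f(x₁, z) − f(x₁, z')| ≤ M |z − z'|^{(1+γ)/3}. Then there exists a constant C, depending only on d and γ, such that for all x = (x₁,x₂), y = (y₁,y₂) ∈ ℝ^{2d}: |f(x) − f(y) − ⟨∇_{x₁} f(y), x₁ − y₁⟩| ≤ C M |x − y|_𝐝^{1+γ}. -/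
open scoped RealInnerProductSpace

set_option maxHeartbeats 1000000 in
/-- Taylor expansion estimate in anisotropic Hölder spaces: if `f ∈ C_𝐝^{1+γ}` with all the
relevant seminorms bounded by `M`, then
`|f(x) − f(y) − ⟨∇_{x₁}f(y), x₁ − y₁⟩| ≤ C M |x − y|_𝐝^{1+γ}` with `C = C(d,γ)`. -/
theorem stmt3 (d : ℕ) (hd : 1 ≤ d) (γ : ℝ) (hγ0 : 0 < γ) (hγ1 : γ < 1) :
    ∃ C : ℝ, 0 < C ∧
      ∀ M : ℝ, 0 < M →
      ∀ f : EuclideanSpace ℝ (Fin d) × EuclideanSpace ℝ (Fin d) → ℝ,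
        (∀ x, |f x| ≤ M) →
        (∀ x : EuclideanSpace ℝ (Fin d) × EuclideanSpace ℝ (Fin d),
          DifferentiableAt ℝ (fun z => f (z, x.2)) x.1) →
        (∀ x : EuclideanSpace ℝ (Fin d) × EuclideanSpace ℝ (Fin d),
          ‖gradient (fun z => f (z, x.2)) x.1‖ ≤ M) →
        (∀ x₂ z z' : EuclideanSpace ℝ (Fin d), z ≠ z' → ‖z - z'‖ ≤ 1 →
          ‖gradient (fun w => f (w, x₂)) z - gradient (fun w => f (w, x₂)) z'‖ ≤
            M * ‖z - z'‖ ^ γ) →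
        (∀ x₁ z z' : EuclideanSpace ℝ (Fin d), z ≠ z' → ‖z - z'‖ ≤ 1 →
          |f (x₁, z) - f (x₁, z')| ≤ M * ‖z - z'‖ ^ ((1 + γ) / 3)) →
        ∀ x y : EuclideanSpace ℝ (Fin d) × EuclideanSpace ℝ (Fin d),
          |f x - f y - ⟪gradient (fun z => f (z, y.2)) y.1, x.1 - y.1⟫| ≤
            C * M * (‖x.1 - y.1‖ + ‖x.2 - y.2‖ ^ ((1 : ℝ) / 3)) ^ (1 + γ) := by
  refine ⟨5, by norm_num, ?_⟩
  intro M hM f hbd hdiff hgrad hHol1 hHol2 x y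
  obtain ⟨x₁, x₂⟩ := x
  obtain ⟨y₁, y₂⟩ := y
  show |f (x₁, x₂) - f (y₁, y₂) - ⟪gradient (fun z => f (z, y₂)) y₁, x₁ - y₁⟫| ≤
      5 * M * (‖x₁ - y₁‖ + ‖x₂ - y₂‖ ^ ((1 : ℝ)/3)) ^ (1 + γ)
  set G : EuclideanSpace ℝ (Fin d) := gradient (fun z => f (z, y₂)) y₁ with hG
  set r : ℝ := ‖x₁ - y₁‖ with hr
  set s : ℝ := ‖x₂ - y₂‖ ^ ((1:ℝ)/3) with hs
  have hr0 : 0 ≤ r := norm_nonneg _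
  have hs0 : 0 ≤ s := Real.rpow_nonneg (norm_nonneg _) _
  have hρ0 : 0 ≤ r + s := by linarith
  have hexp0 : (0:ℝ) ≤ 1 + γ := by linarith
  have hρr : r ^ (1+γ) ≤ (r + s) ^ (1+γ) :=
    Real.rpow_le_rpow hr0 (by linarith) hexp0
  have hρs : s ^ (1+γ) ≤ (r + s) ^ (1+γ) :=
    Real.rpow_le_rpow hs0 (by linarith) hexp0
  have hρnn : 0 ≤ (r + s) ^ (1+γ) := Real.rpow_nonneg hρ0 _
  -- Part A : variation in the second variable
  have hA : |f (x₁, x₂) - f (x₁, y₂)| ≤ 2 * M * (r + s) ^ (1+γ) := by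
    by_cases hxy : x₂ = y₂
    · simp [hxy]
      positivity
    · by_cases h1 : ‖x₂ - y₂‖ ≤ 1
      · have hkey := hHol2 x₁ x₂ y₂ hxy h1
        have heq : ‖x₂ - y₂‖ ^ ((1 + γ)/3) = s ^ (1+γ) := by
          rw [hs, ← Real.rpow_mul (norm_nonneg _)]
          ring_nf
        calc |f (x₁, x₂) - f (x₁, y₂)| ≤ M * ‖x₂ - y₂‖ ^ ((1 + γ)/3) := hkey
          _ = M * s ^ (1+γ) := by rw [heq]
          _ ≤ M * (r + s) ^ (1+γ) := by nlinarith
          _ ≤ 2 * M * (r + s) ^ (1+γ) := by nlinarith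
      · push_neg at h1
        have hs1 : (1:ℝ) ≤ s := by
          rw [hs]
          calc (1:ℝ) = 1 ^ ((1:ℝ)/3) := (Real.one_rpow _).symm
            _ ≤ ‖x₂ - y₂‖ ^ ((1:ℝ)/3) :=
              Real.rpow_le_rpow (by norm_num) h1.le (by norm_num)
        have hρ1 : (1:ℝ) ≤ (r + s) ^ (1+γ) := by
          calc (1:ℝ) = 1 ^ (1+γ) := (Real.one_rpow _).symm
            _ ≤ (r + s) ^ (1+γ) := Real.rpow_le_rpow (by norm_num) (by linarith) hexp0
        have h2M : |f (x₁, x₂) - f (x₁, y₂)| ≤ 2 * M :=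
          (abs_sub _ _).trans (by linarith [hbd (x₁, x₂), hbd (x₁, y₂)])
        nlinarith
  -- Part B : Taylor expansion in the first variable
  have hB : |f (x₁, y₂) - f (y₁, y₂) - ⟪G, x₁ - y₁⟫| ≤ 3 * M * (r + s) ^ (1+γ) := by
    by_cases h1 : r ≤ 1
    · -- mean value inequality on the segment [y₁, x₁]
      set h : EuclideanSpace ℝ (Fin d) → ℝ := fun z => f (z, y₂) - (InnerProductSpace.toDual ℝ (EuclideanSpace ℝ (Fin d))) G z with hh
      have key : ∀ z ∈ segment ℝ y₁ x₁,
          HasFDerivWithinAt h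
            ((InnerProductSpace.toDual ℝ (EuclideanSpace ℝ (Fin d))) (gradient (fun w => f (w, y₂)) z)
              - (InnerProductSpace.toDual ℝ (EuclideanSpace ℝ (Fin d))) G)
            (segment ℝ y₁ x₁) z := by
        intro z hz
        have hdz : DifferentiableAt ℝ (fun w => f (w, y₂)) z := hdiff (z, y₂)
        have h1 : HasFDerivAt (fun w => f (w, y₂))
            ((InnerProductSpace.toDual ℝ (EuclideanSpace ℝ (Fin d))) (gradient (fun w => f (w, y₂)) z)) z :=
          hdz.hasGradientAt.hasFDerivAt
        exact ((h1.sub ((InnerProductSpace.toDual ℝ (EuclideanSpace ℝ (Fin d)) G).hasFDerivAt)).hasFDerivWithinAt)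
      have bound : ∀ z ∈ segment ℝ y₁ x₁,
          ‖(InnerProductSpace.toDual ℝ (EuclideanSpace ℝ (Fin d))) (gradient (fun w => f (w, y₂)) z)
              - (InnerProductSpace.toDual ℝ (EuclideanSpace ℝ (Fin d))) G‖ ≤ M * r ^ γ := by
        intro z hz
        have hznorm : ‖z - y₁‖ ≤ r := by
          have hmem : z ∈ Metric.closedBall y₁ r := by
            apply (convex_closedBall y₁ r).segment_subset _ _ hz
            · simp [hr0]
            · simp [Metric.mem_closedBall, dist_eq_norm, hr]
          simpa [Metric.mem_closedBall, dist_eq_norm] using hmem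
        rw [← map_sub, (InnerProductSpace.toDual ℝ (EuclideanSpace ℝ (Fin d))).norm_map]
        by_cases hzy : z = y₁
        · rw [hG, hzy]
          simp only [sub_self, norm_zero]
          positivity
        · have hH := hHol1 y₂ z y₁ hzy (le_trans hznorm h1)
          rw [hG]
          refine hH.trans ?_
          have : ‖z - y₁‖ ^ γ ≤ r ^ γ := Real.rpow_le_rpow (norm_nonneg _) hznorm hγ0.le
          nlinarith
      have hmv := (convex_segment y₁ x₁).norm_image_sub_le_of_norm_hasFDerivWithin_le
        key bound (left_mem_segment ℝ y₁ x₁) (right_mem_segment ℝ y₁ x₁)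
      have hhe : h x₁ - h y₁ = f (x₁, y₂) - f (y₁, y₂) - ⟪G, x₁ - y₁⟫ := by
        simp only [hh, InnerProductSpace.toDual_apply_apply, inner_sub_right]
        ring
      have hrpow : M * r ^ γ * r = M * r ^ (1+γ) := by
        rw [Real.rpow_add' hr0 (by linarith : (1:ℝ)+γ ≠ 0), Real.rpow_one]
        ring
      calc |f (x₁, y₂) - f (y₁, y₂) - ⟪G, x₁ - y₁⟫| = ‖h x₁ - h y₁‖ := by
            rw [hhe, Real.norm_eq_abs]
        _ ≤ M * r ^ γ * ‖x₁ - y₁‖ := hmv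
        _ = M * r ^ (1+γ) := hrpow
        _ ≤ M * (r + s) ^ (1+γ) := by nlinarith
        _ ≤ 3 * M * (r + s) ^ (1+γ) := by nlinarith
    · push_neg at h1
      have hGn : ‖G‖ ≤ M := hgrad (y₁, y₂)
      have hIn : |⟪G, x₁ - y₁⟫| ≤ M * r := by
        calc |⟪G, x₁ - y₁⟫| ≤ ‖G‖ * ‖x₁ - y₁‖ := abs_real_inner_le_norm _ _
          _ ≤ M * r := by nlinarith [norm_nonneg (x₁ - y₁)]
      have hgb : |f (x₁, y₂) - f (y₁, y₂)| ≤ 2 * M :=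
        (abs_sub _ _).trans (by linarith [hbd (x₁, y₂), hbd (y₁, y₂)])
      have hrr : r ≤ r ^ (1+γ) := by
        calc r = r ^ (1:ℝ) := (Real.rpow_one r).symm
          _ ≤ r ^ (1+γ) := Real.rpow_le_rpow_of_exponent_le h1.le (by linarith)
      have hr1 : (1:ℝ) ≤ r ^ (1+γ) := by
        calc (1:ℝ) = 1 ^ (1+γ) := (Real.one_rpow _).symm
          _ ≤ r ^ (1+γ) := Real.rpow_le_rpow (by norm_num) h1.le hexp0
      have htot : |f (x₁, y₂) - f (y₁, y₂) - ⟪G, x₁ - y₁⟫| ≤ 2 * M + M * r := by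
        have := abs_sub (f (x₁, y₂) - f (y₁, y₂)) (⟪G, x₁ - y₁⟫ : ℝ)
        linarith
      nlinarith
  -- combine
  have hsplit : f (x₁, x₂) - f (y₁, y₂) - ⟪G, x₁ - y₁⟫ =
      (f (x₁, x₂) - f (x₁, y₂)) + (f (x₁, y₂) - f (y₁, y₂) - ⟪G, x₁ - y₁⟫) := by ring
  calc |f (x₁, x₂) - f (y₁, y₂) - ⟪G, x₁ - y₁⟫|
      ≤ |f (x₁, x₂) - f (x₁, y₂)| + |f (x₁, y₂) - f (y₁, y₂) - ⟪G, x₁ - y₁⟫| := by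
        rw [hsplit]; exact abs_add_le _ _
    _ ≤ 5 * M * (r + s) ^ (1+γ) := by linarith
end

section
/- Fix d ≥ 1 and 0 ≤ s ≤ t ≤ T. Let F = (F₁,F₂) : [0,T] × ℝ^{2d} → ℝ^{2d} be measurable with F₂ differentiable in its first d space variables and ∇_{x₁}F₂ bounded, and let θ be a two-parameter flow of F in the sense that for all τ and ξ, r ↦ θ_{r,τ}(ξ) is absolutely continuous with θ_{τ,τ}(ξ)=ξ and d/dr θ_{r,τ}(ξ) = F(r, θ_{r,τ}(ξ)) a.e. For a freezing point (t,y), define A(r,z) := [[0,0],[∇_{x₁}F₂(r,z), 0]] ∈ ℝ^{2d×2d}, the resolvent R_{t,s} := [[I_d, 0],[∫_s^t ∇_{x₁}F₂(r, θ_{r,t}(y)) dr, I_d]], and the linearized mean ϑ_{t,s}^{(t,y)}(x) := R_{t,s} x + ∫_s^t R_{t,r} ( F(r, θ_{r,t}(y)) − A(r, θ_{r,t}(y)) θ_{r,t}(y) ) dr. Then for all x ∈ ℝ^{2d}: ϑ_{t,s}^{(t,y)}(x) − y = R_{t,s} ( x − θ_{s,t}(y) ). -/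
open MeasureTheory Matrix
open scoped BigOperators

/-- The lower-left block `∫_s^t ∇_{x₁}F₂(r, θ_{r,t}(y)) dr` of the resolvent `R_{t,s}`. -/
noncomputable def Jmat (d : ℕ) (DF2 : ℝ → Vec d → Matrix (Fin d) (Fin d) ℝ)
    (θ : ℝ → ℝ → Vec d → Vec d) (s t : ℝ) (y : Vec d) : Matrix (Fin d) (Fin d) ℝ :=
  Matrix.of fun i j => ∫ r in s..t, DF2 r (θ r t y) i j

/-- Action of the resolvent `[[I,0],[J,I]]` on `ℝ^{2d}`. -/
def Rapp (d : ℕ) (J : Matrix (Fin d) (Fin d) ℝ) (x : Vec d) : Vec d :=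
  (x.1, J *ᵥ x.1 + x.2)

/-- The linearized mean
`ϑ_{t,s}^{(t,y)}(x) = R_{t,s}x + ∫_s^t R_{t,r}(F(r,θ_{r,t}(y)) − A(r,θ_{r,t}(y)) θ_{r,t}(y)) dr`,
where `A(r,z) = [[0,0],[∇_{x₁}F₂(r,z),0]]`. -/
noncomputable def linMean (d : ℕ) (F : ℝ → Vec d → Vec d)
    (DF2 : ℝ → Vec d → Matrix (Fin d) (Fin d) ℝ) (θ : ℝ → ℝ → Vec d → Vec d)
    (s t : ℝ) (y x : Vec d) : Vec d :=
  Rapp d (Jmat d DF2 θ s t y) x +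
    ∫ r in s..t,
      Rapp d (Jmat d DF2 θ r t y)
        (F r (θ r t y) - (0, DF2 r (θ r t y) *ᵥ (θ r t y).1))

lemma II_clm {E F : Type*} [NormedAddCommGroup E] [NormedSpace ℝ E]
    [NormedAddCommGroup F] [NormedSpace ℝ F] (L : E →L[ℝ] F) {f : ℝ → E} {a b : ℝ}
    (h : IntervalIntegrable f volume a b) :
    IntervalIntegrable (fun x => L (f x)) volume a b :=
  ⟨L.integrable_comp h.1, L.integrable_comp h.2⟩

lemma II_pi {d : ℕ} {f : ℝ → (Fin d → ℝ)} {a b : ℝ}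
    (h : ∀ j, IntervalIntegrable (fun r => f r j) volume a b) :
    IntervalIntegrable f volume a b := by
  have hrw : f = ∑ j : Fin d, (fun r => Pi.single j (f r j)) := by
    funext r
    rw [Finset.sum_apply]
    exact (Finset.univ_sum_single (f r)).symm
  rw [hrw]
  refine IntervalIntegrable.sum Finset.univ fun j _ => ?_
  have hL : IntervalIntegrable (fun x => (LinearMap.toContinuousLinearMap
      (LinearMap.single ℝ (fun _ : Fin d => ℝ) j)) (f x j)) volume a b :=
    ⟨(LinearMap.toContinuousLinearMap (LinearMap.single ℝ (fun _ : Fin d => ℝ) j)).integrable_comp (h j).1,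
     (LinearMap.toContinuousLinearMap (LinearMap.single ℝ (fun _ : Fin d => ℝ) j)).integrable_comp (h j).2⟩
  have heq : (fun x => (LinearMap.toContinuousLinearMap
      (LinearMap.single ℝ (fun _ : Fin d => ℝ) j)) (f x j))
      = fun r => Pi.single j (f r j) := by
    funext r
    simp
  rwa [heq] at hL

lemma triangle_swap {f g : ℝ → ℝ} {s t : ℝ} (hst : s ≤ t)
    (hf : IntegrableOn f (Set.Ioc s t)) (hg : IntegrableOn g (Set.Ioc s t)) :
    ∫ r in s..t, (∫ u in r..t, f u) * g r = ∫ u in s..t, f u * ∫ r in s..u, g r := by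
  have hS : MeasurableSet {p : ℝ × ℝ | p.1 < p.2} :=
    measurableSet_lt measurable_fst measurable_snd
  set μ := volume.restrict (Set.Ioc s t) with hμ
  have hprod : Integrable (fun p : ℝ × ℝ => f p.2 * g p.1) (μ.prod μ) := by
    have := hg.mul_prod hf
    simpa [mul_comm] using this
  have hint : Integrable (fun p : ℝ × ℝ => if p.1 < p.2 then f p.2 * g p.1 else 0)
      (μ.prod μ) := by
    have := hprod.indicator hS
    refine this.congr (Filter.Eventually.of_forall fun p => ?_)
    simp [Set.indicator_apply]
  have swap := MeasureTheory.integral_integral_swap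
    (f := fun r u => if r < u then f u * g r else 0) hint
  calc ∫ r in s..t, (∫ u in r..t, f u) * g r
      = ∫ r in Set.Ioc s t, (∫ u in r..t, f u) * g r := intervalIntegral.integral_of_le hst
    _ = ∫ r in Set.Ioc s t, ∫ u in Set.Ioc s t, (if r < u then f u * g r else 0) := by
        apply setIntegral_congr_fun measurableSet_Ioc
        intro r hr
        dsimp only
        have e1 : ∫ u in Set.Ioc s t, (if r < u then f u * g r else 0)
            = ∫ u in Set.Ioc s t ∩ Set.Ioi r, f u * g r := by
          rw [← setIntegral_indicator measurableSet_Ioi]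
          simp [Set.indicator_apply]
        have e2 : Set.Ioc s t ∩ Set.Ioi r = Set.Ioc r t := by
          rw [Set.Ioc_inter_Ioi, max_eq_right hr.1.le]
        rw [e1, e2, MeasureTheory.integral_mul_const,
          ← intervalIntegral.integral_of_le hr.2]
    _ = ∫ u in Set.Ioc s t, ∫ r in Set.Ioc s t, (if r < u then f u * g r else 0) := swap
    _ = ∫ u in Set.Ioc s t, f u * ∫ r in s..u, g r := by
        apply setIntegral_congr_fun measurableSet_Ioc
        intro u hu
        dsimp only
        have e1 : ∫ r in Set.Ioc s t, (if r < u then f u * g r else 0)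
            = ∫ r in Set.Ioc s t ∩ Set.Iio u, f u * g r := by
          rw [← setIntegral_indicator measurableSet_Iio]
          simp [Set.indicator_apply]
        have e2 : Set.Ioc s t ∩ Set.Iio u = Set.Ioo s u := by
          ext r
          simp only [Set.mem_inter_iff, Set.mem_Ioc, Set.mem_Iio, Set.mem_Ioo]
          constructor
          · rintro ⟨⟨h1, _⟩, h3⟩; exact ⟨h1, h3⟩
          · rintro ⟨h1, h3⟩; exact ⟨⟨h1, h3.le.trans hu.2⟩, h3⟩
        rw [e1, e2, MeasureTheory.integral_const_mul,
          ← MeasureTheory.integral_Ioc_eq_integral_Ioo,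
          ← intervalIntegral.integral_of_le hu.1.le]
    _ = ∫ u in s..t, f u * ∫ r in s..u, g r := (intervalIntegral.integral_of_le hst).symm

lemma key_identity {f g : ℝ → ℝ} {s t : ℝ} (hst : s ≤ t)
    (hf : IntervalIntegrable f volume s t) (hg : IntervalIntegrable g volume s t) :
    (∫ r in s..t, (∫ u in r..t, f u) * g r) + ∫ r in s..t, f r * ∫ u in r..t, g u
      = (∫ r in s..t, f r) * ∫ r in s..t, g r := by
  rw [triangle_swap hst hf.1 hg.1]
  have hc1 : ContinuousOn (fun u => ∫ r in s..u, g r) (Set.uIcc s t) :=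
    intervalIntegral.continuousOn_primitive_interval' hg Set.left_mem_uIcc
  have hc2 : ContinuousOn (fun u => ∫ r in u..t, g r) (Set.uIcc s t) := by
    have h := (intervalIntegral.continuousOn_primitive_interval' hg Set.right_mem_uIcc).neg
    have e : (fun u => ∫ r in u..t, g r) = fun u => -∫ r in t..u, g r := by
      funext u; rw [intervalIntegral.integral_symm]
    rw [e]; exact h
  have h1 : IntervalIntegrable (fun u => f u * ∫ r in s..u, g r) volume s t :=
    hf.mul_continuousOn hc1
  have h2 : IntervalIntegrable (fun u => f u * ∫ r in u..t, g r) volume s t :=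
    hf.mul_continuousOn hc2
  rw [← intervalIntegral.integral_add h1 h2]
  have he : ∀ u ∈ Set.uIcc s t,
      f u * (∫ r in s..u, g r) + f u * ∫ r in u..t, g r = f u * ∫ r in s..t, g r := by
    intro u hu
    rw [← mul_add, intervalIntegral.integral_add_adjacent_intervals
      (hg.mono_set (Set.uIcc_subset_uIcc Set.left_mem_uIcc hu))
      (hg.mono_set (Set.uIcc_subset_uIcc hu Set.right_mem_uIcc))]
  rw [intervalIntegral.integral_congr he, intervalIntegral.integral_mul_const]

lemma II_sum' {ι : Type*} (s : Finset ι) {f : ι → ℝ → ℝ} {a b : ℝ}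
    (h : ∀ i ∈ s, IntervalIntegrable (f i) volume a b) :
    IntervalIntegrable (fun r => ∑ i ∈ s, f i r) volume a b := by
  have h2 := IntervalIntegrable.sum s h
  have e : (∑ i ∈ s, f i) = fun r => ∑ i ∈ s, f i r := by
    funext r; simp
  rwa [e] at h2

lemma cont_back {f : ℝ → ℝ} {s t : ℝ} (h : IntervalIntegrable f volume s t) :
    ContinuousOn (fun r => ∫ u in r..t, f u) (Set.uIcc s t) := by
  have hc := (intervalIntegral.continuousOn_primitive_interval' h Set.right_mem_uIcc).neg
  have e : (fun r => ∫ u in r..t, f u) = fun r => -∫ u in t..r, f u := by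
    funext r; rw [intervalIntegral.integral_symm]
  rw [e]; exact hc

lemma integral_comp_fst_apply {d : ℕ} {f : ℝ → Vec d} {a b : ℝ}
    (h : IntervalIntegrable f volume a b) (j : Fin d) :
    (∫ r in a..b, f r).1 j = ∫ r in a..b, (f r).1 j := by
  have := ContinuousLinearMap.intervalIntegral_comp_comm
    ((ContinuousLinearMap.proj j).comp
      (ContinuousLinearMap.fst ℝ (Fin d → ℝ) (Fin d → ℝ))) h
  simpa using this.symm

lemma integral_comp_snd_apply {d : ℕ} {f : ℝ → Vec d} {a b : ℝ}
    (h : IntervalIntegrable f volume a b) (i : Fin d) :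
    (∫ r in a..b, f r).2 i = ∫ r in a..b, (f r).2 i := by
  have := ContinuousLinearMap.intervalIntegral_comp_comm
    ((ContinuousLinearMap.proj i).comp
      (ContinuousLinearMap.snd ℝ (Fin d → ℝ) (Fin d → ℝ))) h
  simpa using this.symm

/-- The linearized mean transports the backward flow:
`ϑ_{t,s}^{(t,y)}(x) − y = R_{t,s}(x − θ_{s,t}(y))`. -/
theorem stmt12 (d : ℕ) (hd : 1 ≤ d) (T s t M : ℝ)
    (hs : 0 ≤ s) (hst : s ≤ t) (htT : t ≤ T) (hM : 0 < M)
    (F : ℝ → Vec d → Vec d) (DF2 : ℝ → Vec d → Matrix (Fin d) (Fin d) ℝ)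
    (θ : ℝ → ℝ → Vec d → Vec d) (y : Vec d)
    -- F is measurable
    (hFmeas : Measurable fun p : ℝ × Vec d => F p.1 p.2)
    -- DF2 is the Jacobian of F₂ in the first d space variables
    (hDF2jac : ∀ r x, HasFDerivAt (fun z : Fin d → ℝ => (F r (z, x.2)).2)
        (LinearMap.toContinuousLinearMap (Matrix.mulVecLin (DF2 r x))) x.1)
    -- ∇_{x₁}F₂ is bounded
    (hDF2bdd : ∀ r x i j, |DF2 r x i j| ≤ M)
    -- the curve r ↦ θ_{r,t}(y) is absolutely continuous with a.e. derivative F(r,θ_{r,t}(y)),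
    -- i.e. it satisfies the integral equation, with integrable right-hand side
    (hflow : ∀ r ∈ Set.Icc (0 : ℝ) T, θ r t y = y + ∫ u in t..r, F u (θ u t y))
    (hFint : IntervalIntegrable (fun u => F u (θ u t y)) volume s t)
    (hDint : ∀ i j, IntervalIntegrable (fun r => DF2 r (θ r t y) i j) volume s t) :
    ∀ x : Vec d,
      linMean d F DF2 θ s t y x - y = Rapp d (Jmat d DF2 θ s t y) (x - θ s t y) := by
  intro x
  -- flow component formulas on [[s,t]]
  have hγ1 : ∀ (j : Fin d), ∀ r ∈ Set.uIcc s t,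
      (θ r t y).1 j = y.1 j + ∫ u in t..r, (F u (θ u t y)).1 j := by
    intro j r hr
    have hr' : r ∈ Set.Icc s t := by rwa [Set.uIcc_of_le hst] at hr
    have hmem : r ∈ Set.Icc (0:ℝ) T := ⟨hs.trans hr'.1, hr'.2.trans htT⟩
    have hFsub : IntervalIntegrable (fun u => F u (θ u t y)) volume t r :=
      hFint.mono_set (Set.uIcc_subset_uIcc Set.right_mem_uIcc hr)
    rw [hflow r hmem]
    show (y + ∫ u in t..r, F u (θ u t y)).1 j = _
    rw [Prod.fst_add, Pi.add_apply, integral_comp_fst_apply hFsub j]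
  have hγ2 : ∀ (i : Fin d), ∀ r ∈ Set.uIcc s t,
      (θ r t y).2 i = y.2 i + ∫ u in t..r, (F u (θ u t y)).2 i := by
    intro i r hr
    have hr' : r ∈ Set.Icc s t := by rwa [Set.uIcc_of_le hst] at hr
    have hmem : r ∈ Set.Icc (0:ℝ) T := ⟨hs.trans hr'.1, hr'.2.trans htT⟩
    have hFsub : IntervalIntegrable (fun u => F u (θ u t y)) volume t r :=
      hFint.mono_set (Set.uIcc_subset_uIcc Set.right_mem_uIcc hr)
    rw [hflow r hmem]
    show (y + ∫ u in t..r, F u (θ u t y)).2 i = _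
    rw [Prod.snd_add, Pi.add_apply, integral_comp_snd_apply hFsub i]
  -- scalar integrability of components of F along the flow
  have hg : ∀ j : Fin d, IntervalIntegrable (fun r => (F r (θ r t y)).1 j) volume s t :=
    fun j => II_clm ((ContinuousLinearMap.proj j).comp
      (ContinuousLinearMap.fst ℝ (Fin d → ℝ) (Fin d → ℝ))) hFint
  have hh : ∀ i : Fin d, IntervalIntegrable (fun r => (F r (θ r t y)).2 i) volume s t :=
    fun i => II_clm ((ContinuousLinearMap.proj i).comp
      (ContinuousLinearMap.snd ℝ (Fin d → ℝ) (Fin d → ℝ))) hFint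
  have hγ1c : ∀ j : Fin d, ContinuousOn (fun r => (θ r t y).1 j) (Set.uIcc s t) := by
    intro j
    have hc : ContinuousOn (fun r => y.1 j + ∫ u in t..r, (F u (θ u t y)).1 j)
        (Set.uIcc s t) :=
      continuousOn_const.add
        (intervalIntegral.continuousOn_primitive_interval' (hg j) Set.right_mem_uIcc)
    exact hc.congr (hγ1 j)
  have hJc : ∀ i j : Fin d,
      ContinuousOn (fun r => ∫ u in r..t, DF2 u (θ u t y) i j) (Set.uIcc s t) :=
    fun i j => cont_back (hDint i j)
  have hGc : ∀ j : Fin d,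
      ContinuousOn (fun r => ∫ u in r..t, (F u (θ u t y)).1 j) (Set.uIcc s t) :=
    fun j => cont_back (hg j)
  -- the integrand, written componentwise
  set Φ : ℝ → Vec d := fun r =>
    ((F r (θ r t y)).1,
     fun i => (∑ j, (∫ u in r..t, DF2 u (θ u t y) i j) * (F r (θ r t y)).1 j)
       + ((F r (θ r t y)).2 i - ∑ j, DF2 r (θ r t y) i j * (θ r t y).1 j)) with hΦdef
  have hterm1 : ∀ i j : Fin d, IntervalIntegrable
      (fun r => (∫ u in r..t, DF2 u (θ u t y) i j) * (F r (θ r t y)).1 j) volume s t :=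
    fun i j => (hg j).continuousOn_mul (hJc i j)
  have hterm3 : ∀ i j : Fin d, IntervalIntegrable
      (fun r => DF2 r (θ r t y) i j * (θ r t y).1 j) volume s t :=
    fun i j => (hDint i j).mul_continuousOn (hγ1c j)
  have hΦ2c : ∀ i : Fin d, IntervalIntegrable (fun r =>
      (∑ j, (∫ u in r..t, DF2 u (θ u t y) i j) * (F r (θ r t y)).1 j)
        + ((F r (θ r t y)).2 i - ∑ j, DF2 r (θ r t y) i j * (θ r t y).1 j)) volume s t :=
    fun i => (II_sum' Finset.univ (fun j _ => hterm1 i j)).add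
      ((hh i).sub (II_sum' Finset.univ (fun j _ => hterm3 i j)))
  have hΦ1 : IntervalIntegrable (fun r => (F r (θ r t y)).1) volume s t := II_pi hg
  have hΦ2 : IntervalIntegrable (fun r => (fun i =>
      (∑ j, (∫ u in r..t, DF2 u (θ u t y) i j) * (F r (θ r t y)).1 j)
        + ((F r (θ r t y)).2 i - ∑ j, DF2 r (θ r t y) i j * (θ r t y).1 j) : Fin d → ℝ))
      volume s t := II_pi hΦ2c
  have hΦ : IntervalIntegrable Φ volume s t := by
    rw [hΦdef]
    exact ⟨hΦ1.1.prodMk hΦ2.1, hΦ1.2.prodMk hΦ2.2⟩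
  -- the integrand in `linMean` equals `Φ`
  have hrwint : (∫ r in s..t, Rapp d (Jmat d DF2 θ r t y)
      (F r (θ r t y) - (0, DF2 r (θ r t y) *ᵥ (θ r t y).1))) = ∫ r in s..t, Φ r := by
    apply intervalIntegral.integral_congr
    intro r _
    dsimp only
    rw [hΦdef]
    refine Prod.ext ?_ ?_
    · simp [Rapp]
    · funext i
      simp [Rapp, Jmat, Matrix.mulVec, dotProduct, Finset.mul_sum,
        Finset.sum_sub_distrib]
  -- endpoint values of the flow integrals
  have hgint : ∀ j : Fin d, ∫ r in s..t, (F r (θ r t y)).1 j = y.1 j - (θ s t y).1 j := by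
    intro j
    have h1 := hγ1 j s Set.left_mem_uIcc
    rw [intervalIntegral.integral_symm] at h1
    linarith
  have hhint : ∀ i : Fin d, ∫ r in s..t, (F r (θ r t y)).2 i = y.2 i - (θ s t y).2 i := by
    intro i
    have h1 := hγ2 i s Set.left_mem_uIcc
    rw [intervalIntegral.integral_symm] at h1
    linarith
  -- the main integral identity
  have hmain : (∫ r in s..t, Φ r) = y - Rapp d (Jmat d DF2 θ s t y) (θ s t y) := by
    refine Prod.ext ?_ ?_
    · funext j
      rw [show (∫ r in s..t, Φ r).1 j = ∫ r in s..t, (Φ r).1 j from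
        integral_comp_fst_apply hΦ j]
      simp only [hΦdef]
      rw [hgint j]
      simp [Rapp]
    · funext i
      rw [show (∫ r in s..t, Φ r).2 i = ∫ r in s..t, (Φ r).2 i from
        integral_comp_snd_apply hΦ i]
      simp only [hΦdef]
      rw [intervalIntegral.integral_add (II_sum' Finset.univ (fun j _ => hterm1 i j))
        ((hh i).sub (II_sum' Finset.univ (fun j _ => hterm3 i j)))]
      rw [intervalIntegral.integral_sub (hh i) (II_sum' Finset.univ (fun j _ => hterm3 i j))]
      rw [intervalIntegral.integral_finset_sum (fun j _ => hterm1 i j)]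
      rw [intervalIntegral.integral_finset_sum (fun j _ => hterm3 i j)]
      have hT3 : ∀ j : Fin d, ∫ r in s..t, DF2 r (θ r t y) i j * (θ r t y).1 j
          = (∫ r in s..t, DF2 r (θ r t y) i j) * y.1 j
            - ∫ r in s..t, DF2 r (θ r t y) i j * ∫ u in r..t, (F u (θ u t y)).1 j := by
        intro j
        have hcongr : Set.EqOn (fun r => DF2 r (θ r t y) i j * (θ r t y).1 j)
            (fun r => DF2 r (θ r t y) i j * y.1 j
              - DF2 r (θ r t y) i j * ∫ u in r..t, (F u (θ u t y)).1 j) (Set.uIcc s t) := by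
          intro r hr
          dsimp only
          rw [hγ1 j r hr, intervalIntegral.integral_symm]
          ring
        rw [intervalIntegral.integral_congr hcongr,
          intervalIntegral.integral_sub ((hDint i j).mul_const _)
            ((hDint i j).mul_continuousOn (hGc j)),
          intervalIntegral.integral_mul_const]
      have hkey : ∀ j : Fin d,
          ∫ r in s..t, (∫ u in r..t, DF2 u (θ u t y) i j) * (F r (θ r t y)).1 j
          = (∫ r in s..t, DF2 r (θ r t y) i j) * (∫ r in s..t, (F r (θ r t y)).1 j)
            - ∫ r in s..t, DF2 r (θ r t y) i j * ∫ u in r..t, (F u (θ u t y)).1 j := by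
        intro j
        have hk := key_identity hst (hDint i j) (hg j)
        linarith
      rw [Finset.sum_congr rfl (fun j _ => hkey j), Finset.sum_congr rfl (fun j _ => hT3 j)]
      rw [hhint i]
      have hrhs : (y - Rapp d (Jmat d DF2 θ s t y) (θ s t y)).2 i
          = y.2 i - ((∑ j, (∫ r in s..t, DF2 r (θ r t y) i j) * (θ s t y).1 j)
            + (θ s t y).2 i) := by
        simp [Rapp, Jmat, Matrix.mulVec, dotProduct]
      rw [hrhs]
      have hsplit1 : ∑ j, ((∫ r in s..t, DF2 r (θ r t y) i j)
            * (∫ r in s..t, (F r (θ r t y)).1 j)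
          - ∫ r in s..t, DF2 r (θ r t y) i j * ∫ u in r..t, (F u (θ u t y)).1 j)
          = (∑ j, (∫ r in s..t, DF2 r (θ r t y) i j) * y.1 j)
            - (∑ j, (∫ r in s..t, DF2 r (θ r t y) i j) * (θ s t y).1 j)
            - ∑ j, ∫ r in s..t, DF2 r (θ r t y) i j * ∫ u in r..t, (F u (θ u t y)).1 j := by
        rw [← Finset.sum_sub_distrib, ← Finset.sum_sub_distrib]
        refine Finset.sum_congr rfl fun j _ => ?_
        rw [hgint j]
        ring
      have hsplit2 : ∑ j, ((∫ r in s..t, DF2 r (θ r t y) i j) * y.1 j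
          - ∫ r in s..t, DF2 r (θ r t y) i j * ∫ u in r..t, (F u (θ u t y)).1 j)
          = (∑ j, (∫ r in s..t, DF2 r (θ r t y) i j) * y.1 j)
            - ∑ j, ∫ r in s..t, DF2 r (θ r t y) i j * ∫ u in r..t, (F u (θ u t y)).1 j :=
        Finset.sum_sub_distrib _ _
      rw [hsplit1, hsplit2]
      ring
  -- conclusion
  have hlm : linMean d F DF2 θ s t y x = Rapp d (Jmat d DF2 θ s t y) x
      + ∫ r in s..t, Rapp d (Jmat d DF2 θ r t y)
          (F r (θ r t y) - (0, DF2 r (θ r t y) *ᵥ (θ r t y).1)) := rfl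
  rw [hlm, hrwint, hmain]
  refine Prod.ext ?_ ?_
  · show x.1 + (y.1 - (θ s t y).1) - y.1 = x.1 - (θ s t y).1
    abel
  · show (Jmat d DF2 θ s t y) *ᵥ x.1 + x.2
        + (y.2 - ((Jmat d DF2 θ s t y) *ᵥ (θ s t y).1 + (θ s t y).2)) - y.2
      = (Jmat d DF2 θ s t y) *ᵥ (x - θ s t y).1 + (x - θ s t y).2
    rw [Prod.fst_sub, Prod.snd_sub, Matrix.mulVec_sub]
    abel
end
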